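/- Discrete three-gap structure of return times: let q' > N ≥ 1 be integers and r an integer coprime to q' with 0 < r < q'. Define for 0 ≤ m < N the return time τ(m) = min{ℓ ≥ 1 : 0 ≤ |m + ℓr|_{q'} < N}. Then there exist positive integers τ₁, τ₂ and integers 0 ≤ N₁ ≤ N₂ ≤ N such that τ(m) = τ₁ for 0 ≤ m < N₁, τ(m) = τ₁+τ₂ for N₁ ≤ m < N₂, and τ(m) = τ₂ for N₂ ≤ m < N. -/
import Mathlib


theorem discrete_three_gap_return_times (q' N r : ℕ)
    (hN : 1 ≤ N) (hNq : N < q') (hr0 : 0 < r) (hr1 : r < q')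
    (hcop : Nat.Coprime r q') (τ : ℕ → ℕ)
    (hτ : ∀ m, m < N → 1 ≤ τ m ∧ (m + τ m * r) % q' < N ∧
      ∀ ℓ, 1 ≤ ℓ → (m + ℓ * r) % q' < N → τ m ≤ ℓ) :
    ∃ τ₁ τ₂ N₁ N₂ : ℕ, 0 < τ₁ ∧ 0 < τ₂ ∧ N₁ ≤ N₂ ∧ N₂ ≤ N ∧
      ∀ m, m < N → τ m = if m < N₁ then τ₁ else if m < N₂ then τ₁ + τ₂ else τ₂ := by
  rcases Nat.lt_or_ge N 2 with hN1 | hN2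
  · -- N = 1 case
    have hN' : N = 1 := by omega
    obtain ⟨h1, -, -⟩ := hτ 0 (by omega)
    refine ⟨τ 0, τ 0, 1, 1, h1, h1, le_refl _, by omega, ?_⟩
    intro m hm
    have hm0 : m = 0 := by omega
    subst hm0
    simp
  · -- main case : N ≥ 2
    set d : ℕ → ℕ := fun ℓ => (ℓ * r) % q' with hd
    have hq0 : 0 < q' := by omega
    haveI : NeZero q' := ⟨by omega⟩
    haveI : Fact (1 < q') := ⟨by omega⟩
    have hdlt : ∀ ℓ, d ℓ < q' := fun ℓ => Nat.mod_lt _ hq0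
    have hdadd : ∀ ℓ₁ ℓ₂, d (ℓ₁ + ℓ₂) = (d ℓ₁ + d ℓ₂) % q' := by
      intro ℓ₁ ℓ₂
      show ((ℓ₁ + ℓ₂) * r) % q' = ((ℓ₁ * r) % q' + (ℓ₂ * r) % q') % q'
      rw [Nat.add_mul]
      exact Nat.add_mod _ _ _
    have hdne : ∀ ℓ, 1 ≤ ℓ → ℓ < q' → d ℓ ≠ 0 := by
      intro ℓ h1 h2 h0
      have hdvd : q' ∣ ℓ * r := Nat.dvd_of_mod_eq_zero h0
      have hdvd2 : q' ∣ ℓ := Nat.Coprime.dvd_of_dvd_mul_right (Nat.Coprime.symm hcop) hdvd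
      have := Nat.le_of_dvd (by omega) hdvd2
      omega
    -- existence of ℓ with d ℓ = 1
    obtain ⟨ℓ₁, hℓ₁q, hℓ₁⟩ : ∃ ℓ, ℓ < q' ∧ d ℓ = 1 := by
      have hu : IsUnit (r : ZMod q') := by
        rw [ZMod.isUnit_iff_coprime]
        exact hcop
      refine ⟨((r : ZMod q')⁻¹).val, ZMod.val_lt _, ?_⟩
      have h1 : ((((r : ZMod q')⁻¹).val * r : ℕ) : ZMod q') = 1 := by
        push_cast
        rw [ZMod.natCast_val, ZMod.cast_id]
        exact ZMod.inv_mul_of_unit _ hu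
      show ((((r : ZMod q')⁻¹).val * r)) % q' = 1
      have h2 := ZMod.val_natCast (n := q') ((((r : ZMod q')⁻¹).val * r))
      rw [h1, ZMod.val_one] at h2
      exact h2.symm
    have hℓ₁1 : 1 ≤ ℓ₁ := by
      rcases Nat.eq_zero_or_pos ℓ₁ with h | h
      · exfalso; rw [h] at hℓ₁; simp [hd] at hℓ₁
      · exact h
    -- existence of ℓ with d ℓ = q' - 1
    obtain ⟨ℓ₂, hℓ₂q, hℓ₂1, hℓ₂⟩ : ∃ ℓ, ℓ < q' ∧ 1 ≤ ℓ ∧ d ℓ = q' - 1 := by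
      refine ⟨q' - ℓ₁, by omega, by omega, ?_⟩
      have h1 : d (q' - ℓ₁ + ℓ₁) = (d (q' - ℓ₁) + d ℓ₁) % q' := hdadd _ _
      have h2 : q' - ℓ₁ + ℓ₁ = q' := by omega
      have h3 : d q' = 0 := by simp [hd, Nat.mul_mod_right]
      rw [h2, h3, hℓ₁] at h1
      have h4 : d (q' - ℓ₁) < q' := hdlt _
      rcases Nat.lt_or_ge (d (q' - ℓ₁) + 1) q' with h | h
      · rw [Nat.mod_eq_of_lt h] at h1; omega
      · have : d (q' - ℓ₁) + 1 = q' := by omega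
        omega
    -- mod split helper
    have hsplit : ∀ x y : ℕ, x < q' → y < q' →
        (x + y) % q' = if x + y < q' then x + y else x + y - q' := by
      intro x y hx hy
      split_ifs with h
      · exact Nat.mod_eq_of_lt h
      · rw [Nat.mod_eq_sub_mod (by omega)]
        exact Nat.mod_eq_of_lt (by omega)
    have hret : ∀ m ℓ, m < q' → (m + ℓ * r) % q' = (m + d ℓ) % q' := by
      intro m ℓ hm
      conv_lhs => rw [Nat.add_mod, Nat.mod_eq_of_lt hm]
    -- define t_a and t_b
    have hPa : ∃ ℓ, 1 ≤ ℓ ∧ d ℓ < N := ⟨ℓ₁, hℓ₁1, by omega⟩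
    have hPb : ∃ ℓ, 1 ≤ ℓ ∧ q' - N < d ℓ := ⟨ℓ₂, hℓ₂1, by omega⟩
    set ta := Nat.find hPa with hta
    set tb := Nat.find hPb with htb
    obtain ⟨hta1, htaN⟩ := Nat.find_spec hPa
    obtain ⟨htb1, htbN⟩ := Nat.find_spec hPb
    have hamin : ∀ ℓ, 1 ≤ ℓ → d ℓ < N → ta ≤ ℓ := by
      intro ℓ h1 h2; exact Nat.find_le ⟨h1, h2⟩
    have hbmin : ∀ ℓ, 1 ≤ ℓ → q' - N < d ℓ → tb ≤ ℓ := by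
      intro ℓ h1 h2; exact Nat.find_le ⟨h1, h2⟩
    have htaq : ta < q' := lt_of_le_of_lt (hamin ℓ₁ hℓ₁1 (by omega)) hℓ₁q
    have htbq : tb < q' := lt_of_le_of_lt (hbmin ℓ₂ hℓ₂1 (by omega)) hℓ₂q
    set a := d ta with ha
    set b := d tb with hb
    have ha1 : 1 ≤ a := Nat.one_le_iff_ne_zero.mpr (hdne ta hta1 htaq)
    have hbq : b < q' := hdlt tb
    set s := q' - b with hs
    have hs1 : 1 ≤ s := by omega
    have hsN : s < N := by omega
    -- Lemma L : N ≤ a + s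
    have hL : N ≤ a + s := by
      rcases Nat.lt_trichotomy ta tb with h | h | h
      · -- ta < tb : consider ℓ = tb - ta
        have h1 : d tb = (d (tb - ta) + a) % q' := by
          have := hdadd (tb - ta) ta
          rw [Nat.sub_add_cancel (le_of_lt h)] at this
          rw [this]
        have h2 : d (tb - ta) ≤ q' - N := by
          by_contra hc
          have := hbmin (tb - ta) (by omega) (by omega)
          omega
        have h3 : d (tb - ta) + a < q' := by omega
        rw [Nat.mod_eq_of_lt h3] at h1
        omega
      · -- ta = tb
        have : a = b := by rw [ha, hb, h]
        omega
      · -- tb < ta : consider ℓ = ta - tb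
        have h1 : d ta = (d (ta - tb) + b) % q' := by
          have := hdadd (ta - tb) tb
          rw [Nat.sub_add_cancel (le_of_lt h)] at this
          rw [this]
        have h2 : N ≤ d (ta - tb) := by
          by_contra hc
          have := hamin (ta - tb) (by omega) (by omega)
          omega
        have h4 : d (ta - tb) < q' := hdlt _
        have h3 : q' ≤ d (ta - tb) + b := by omega
        rw [Nat.mod_eq_sub_mod h3, Nat.mod_eq_of_lt (by omega)] at h1
        omega
    -- Lemma M1 : for 1 ≤ ℓ < ta + tb with d ℓ < N we have a ≤ d ℓ
    have hM1 : ∀ ℓ, 1 ≤ ℓ → ℓ < ta + tb → d ℓ < N → a ≤ d ℓ := by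
      intro ℓ h1 h2 h3
      have hge : ta ≤ ℓ := hamin ℓ h1 h3
      rcases eq_or_lt_of_le hge with h | h
      · rw [ha, h]
      · have h4 : d ℓ = (d (ℓ - ta) + a) % q' := by
          have := hdadd (ℓ - ta) ta
          rw [Nat.sub_add_cancel (le_of_lt h)] at this
          rw [this]
        have h5 : d (ℓ - ta) ≤ q' - N := by
          by_contra hc
          have := hbmin (ℓ - ta) (by omega) (by omega)
          omega
        have h6 : d (ℓ - ta) + a < q' := by omega
        rw [Nat.mod_eq_of_lt h6] at h4
        omega
    -- Lemma M2 : for 1 ≤ ℓ < ta + tb with q' - N < d ℓ we have d ℓ ≤ b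
    have hM2 : ∀ ℓ, 1 ≤ ℓ → ℓ < ta + tb → q' - N < d ℓ → d ℓ ≤ b := by
      intro ℓ h1 h2 h3
      have hge : tb ≤ ℓ := hbmin ℓ h1 h3
      rcases eq_or_lt_of_le hge with h | h
      · rw [hb, h]
      · have h4 : d ℓ = (d (ℓ - tb) + b) % q' := by
          have := hdadd (ℓ - tb) tb
          rw [Nat.sub_add_cancel (le_of_lt h)] at this
          rw [this]
        have h5 : N ≤ d (ℓ - tb) := by
          by_contra hc
          have := hamin (ℓ - tb) (by omega) (by omega)
          omega
        have h6 : d (ℓ - tb) < q' := hdlt _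
        rw [Nat.mod_eq_sub_mod (by omega), Nat.mod_eq_of_lt (by omega)] at h4
        omega
    -- conclusion
    refine ⟨ta, tb, N - a, s, by omega, by omega, by omega, by omega, ?_⟩
    intro m hm
    obtain ⟨h1, h2, h3⟩ := hτ m hm
    have hmq : m < q' := by omega
    -- characterize return of τ m
    have hretτ : (m + d (τ m)) % q' < N := by rw [← hret m (τ m) hmq]; exact h2
    split_ifs with hc1 hc2
    · -- m < N - a : τ m = ta
      have hle : τ m ≤ ta := by
        apply h3 ta hta1
        rw [hret m ta hmq, Nat.mod_eq_of_lt (by omega)]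
        omega
      refine le_antisymm hle ?_
      by_contra hlt
      push_neg at hlt
      rw [hsplit m (d (τ m)) hmq (hdlt _)] at hretτ
      split_ifs at hretτ with h
      · have := hamin (τ m) h1 (by omega)
        omega
      · have h5 : q' - N < d (τ m) := by omega
        have h6 := hM2 (τ m) h1 (by omega) h5
        omega
    · -- N - a ≤ m < s : τ m = ta + tb
      have hle : τ m ≤ ta + tb := by
        apply h3 (ta + tb) (by omega)
        rw [hret m (ta + tb) hmq, hdadd ta tb, ← ha, ← hb]
        rcases Nat.lt_or_ge (a + b) q' with hab | hab
        · rw [Nat.mod_eq_of_lt hab, hsplit m (a + b) hmq hab, if_neg (by omega)]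
          omega
        · rw [Nat.mod_eq_sub_mod hab, Nat.mod_eq_of_lt (by omega : a + b - q' < q'),
            Nat.mod_eq_of_lt (by omega : m + (a + b - q') < q')]
          omega
      refine le_antisymm hle ?_
      by_contra hlt
      push_neg at hlt
      rw [hsplit m (d (τ m)) hmq (hdlt _)] at hretτ
      split_ifs at hretτ with h
      · have h4 := hM1 (τ m) h1 (by omega) (by omega)
        omega
      · have h5 : q' - N < d (τ m) := by omega
        have h6 := hM2 (τ m) h1 (by omega) h5
        omega
    · -- s ≤ m < N : τ m = tb
      have hle : τ m ≤ tb := by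
        apply h3 tb htb1
        rw [hret m tb hmq, hsplit m b hmq hbq, if_neg (by omega)]
        omega
      refine le_antisymm hle ?_
      by_contra hlt
      push_neg at hlt
      rw [hsplit m (d (τ m)) hmq (hdlt _)] at hretτ
      split_ifs at hretτ with h
      · have h4 := hM1 (τ m) h1 (by omega) (by omega)
        omega
      · have := hbmin (τ m) h1 (by omega)
        omega
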